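/- Let Δv ∈ (0, V_max] and let μ = ρ·δ_0 be the measure concentrating all mass at velocity 0 (all vehicles at rest). Then the initial rate of change of the macroscopic momentum, defined for a transition kernel A by M(A) = η·[ ∫∫ ( ∫_{[0,V_max]} v dA(v_*,v^*)(v) ) dμ(v_*) dμ(v^*) − ρ·∫_{[0,V_max]} v dμ(v) ], equals M(A_δ) = η·ρ²·P·Δv for the δ model and M(A_χ) = (1/2)·η·ρ²·P·Δv for the χ model; in particular the built-in macroscopic acceleration of each model is proportional to the acceleration parameter Δv. -/

import Mathlib

open MeasureTheory

/-- The uniform (normalized Lebesgue) probability measure on the interval `[a,b]`. -/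
noncomputable def uniformOn (a b : ℝ) : Measure ℝ :=
  (ENNReal.ofReal (b - a))⁻¹ • volume.restrict (Set.Icc a b)

/-- The δ-model transition kernel with acceleration parameter `Δv`:
`A_δ(vs,vf) = (1−P)·δ_{min(vs,vf)} + P·δ_{min(vs+Δv, Vmax)}`. -/
noncomputable def deltaKernel (Vmax Δv P : ℝ) (vs vf : ℝ) : Measure ℝ :=
  ENNReal.ofReal (1 - P) • Measure.dirac (min vs vf)
    + ENNReal.ofReal P • Measure.dirac (min (vs + Δv) Vmax)

/-- The χ-model transition kernel with acceleration parameter `Δv`: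
`A_χ(vs,vf) = (1−P)·δ_{min(vs,vf)} + P·U([vs, min(vs+Δv, Vmax)])`. -/
noncomputable def chiKernel (Vmax Δv P : ℝ) (vs vf : ℝ) : Measure ℝ :=
  ENNReal.ofReal (1 - P) • Measure.dirac (min vs vf)
    + ENNReal.ofReal P • uniformOn vs (min (vs + Δv) Vmax)

/-- The measure `μ = ρ·δ_0` concentrating all mass at velocity `0`
(all vehicles at rest). -/
noncomputable def restMeasure (ρ : ℝ) : Measure ℝ :=
  ENNReal.ofReal ρ • Measure.dirac (0 : ℝ)

lemma integrable_id_dirac (a : ℝ) : Integrable (fun v : ℝ => v) (Measure.dirac a) := by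
  refine (integrable_const a).congr ?_
  rw [MeasureTheory.ae_dirac_eq]
  exact Filter.eventually_pure.2 rfl

lemma integral_id_uniform (b : ℝ) (h : 0 < b) :
    ∫ v, v ∂(uniformOn 0 b) = b / 2 := by
  rw [uniformOn, integral_smul_measure, MeasureTheory.integral_Icc_eq_integral_Ioc,
    ← intervalIntegral.integral_of_le h.le, integral_id]
  rw [ENNReal.toReal_inv, ENNReal.toReal_ofReal (by linarith)]
  simp only [smul_eq_mul, sub_zero]
  field_simp
  ring

lemma integrable_id_uniform (b : ℝ) (h : 0 < b) :
    Integrable (fun v : ℝ => v) (uniformOn 0 b) := by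
  rw [uniformOn]
  refine Integrable.smul_measure ?_ (by simp [ENNReal.ofReal_eq_zero]; linarith)
  exact continuous_id.integrableOn_Icc


/-- Let `Δv ∈ (0, Vmax]` and `μ = ρ·δ_0` (all vehicles at rest).  The initial
rate of change of the macroscopic momentum
`M(A) = η[∫∫(∫ v dA(v_*,v^*)(v)) dμ(v_*) dμ(v^*) − ρ ∫ v dμ]`
equals `η·ρ²·P·Δv` for the δ model and `(1/2)·η·ρ²·P·Δv` for the χ model: the
built-in macroscopic acceleration of each model is proportional to `Δv`. -/
theorem statement19 (Vmax Δv ρ η P : ℝ) (hV : 0 < Vmax) (hΔ0 : 0 < Δv)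
    (hΔ : Δv ≤ Vmax) (hρ : 0 < ρ) (hη : 0 < η) (hP0 : 0 ≤ P) (hP1 : P ≤ 1) :
    (η * ((∫ vf, ∫ vs, (∫ v, v ∂(deltaKernel Vmax Δv P vs vf))
            ∂(restMeasure ρ) ∂(restMeasure ρ))
          - ρ * ∫ v, v ∂(restMeasure ρ))
        = η * ρ ^ 2 * P * Δv)
    ∧ (η * ((∫ vf, ∫ vs, (∫ v, v ∂(chiKernel Vmax Δv P vs vf))
            ∂(restMeasure ρ) ∂(restMeasure ρ))
          - ρ * ∫ v, v ∂(restMeasure ρ))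
        = (1 / 2) * η * ρ ^ 2 * P * Δv) := by
  have hd : ∫ v, v ∂(deltaKernel Vmax Δv P 0 0) = P * Δv := by
    rw [deltaKernel,
      integral_add_measure ((integrable_id_dirac _).smul_measure ENNReal.ofReal_ne_top)
        ((integrable_id_dirac _).smul_measure ENNReal.ofReal_ne_top),
      integral_smul_measure, integral_smul_measure, integral_dirac, integral_dirac]
    simp [min_eq_left hΔ, ENNReal.toReal_ofReal hP0]
  have hc : ∫ v, v ∂(chiKernel Vmax Δv P 0 0) = P * (Δv / 2) := by
    rw [chiKernel]
    simp only [zero_add, min_eq_left hΔ, min_self]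
    rw [integral_add_measure ((integrable_id_dirac _).smul_measure ENNReal.ofReal_ne_top)
        ((integrable_id_uniform Δv hΔ0).smul_measure ENNReal.ofReal_ne_top),
      integral_smul_measure, integral_smul_measure, integral_dirac,
      integral_id_uniform Δv hΔ0]
    simp [ENNReal.toReal_ofReal hP0]
  simp only [restMeasure, integral_smul_measure, integral_dirac, smul_eq_mul, hd, hc,
    ENNReal.toReal_ofReal hρ.le]
  constructor <;> ring
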